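/- arXiv:2008.11050 — 2 statements merged into one kernel-verified Lean document; each statement's English description precedes it below -/
import Mathlib

section
/- With K̂_n, P_{n+1}, Q_{n+1} as above and ||K_n^0|| <= c < 1: if f in L^2(mu_{n+1} x du) satisfies ||K̂_n f||^2 >= (1 - epsilon) ||f||^2 for some 0 <= epsilon <= 1, then ||P_{n+1} f||^2 <= (epsilon/(1 - c^2)) ||f||^2, equivalently ||Q_{n+1} f||^2 >= (1 - epsilon/(1-c^2)) ||f||^2. -/
open MeasureTheory Matrix Filter Topology ProbabilityTheory

noncomputable section

abbrev SL (m : ℕ) := Matrix.SpecialLinearGroup (Fin m) ℝ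

abbrev Sph (m : ℕ) := Metric.sphere (0 : EuclideanSpace ℝ (Fin m)) 1

/-- The linear action of `g ∈ SL(m,ℝ)` on `ℝ^m`. -/
def mvec {m : ℕ} (g : SL m) (u : EuclideanSpace ℝ (Fin m)) : EuclideanSpace ℝ (Fin m) :=
  Matrix.toEuclideanLin (g : Matrix (Fin m) (Fin m) ℝ) u

open scoped Classical in
/-- The projective action `g.u = gu/‖gu‖` of `SL(m,ℝ)` on the unit sphere. -/
def projAct {m : ℕ} (g : SL m) (u : Sph m) : Sph m :=
  if h : mvec g u.1 = 0 then u else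
    ⟨‖mvec g u.1‖⁻¹ • mvec g u.1, by
      rw [mem_sphere_zero_iff_norm, norm_smul, norm_inv, norm_norm,
        inv_mul_cancel₀ (norm_ne_zero_iff.mpr h)]⟩

/-- The normalized uniform (Lebesgue) measure on the unit sphere `S^{m-1}`. -/
def sphμ (m : ℕ) : Measure (Sph m) :=
  ((volume : Measure (EuclideanSpace ℝ (Fin m))).toSphere Set.univ)⁻¹ •
    (volume : Measure (EuclideanSpace ℝ (Fin m))).toSphere



section AuxHelpers
variable {α : Type*} [MeasurableSpace α]

lemma sq_integral_le' (μ : Measure α) [IsProbabilityMeasure μ] {f : α → ℝ}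
    (h1 : Integrable f μ) (h2 : Integrable (fun x => f x ^ 2) μ) :
    (∫ x, f x ∂μ) ^ 2 ≤ ∫ x, f x ^ 2 ∂μ := by
  set t := ∫ x, f x ∂μ with ht
  have h0 : 0 ≤ ∫ x, (f x - t) ^ 2 ∂μ := integral_nonneg fun x => sq_nonneg _
  have hexp : ∫ x, (f x - t) ^ 2 ∂μ = (∫ x, f x ^ 2 ∂μ) - 2 * t * t + t ^ 2 := by
    have e : ∀ x, (f x - t) ^ 2 = f x ^ 2 - (2 * t) * f x + t ^ 2 := fun x => by ring
    simp_rw [e]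
    have i0 : Integrable (fun x => (2 * t) * f x) μ := h1.const_mul (2 * t)
    have i1 : Integrable (fun x => f x ^ 2 - (2 * t) * f x) μ := h2.sub i0
    rw [integral_add i1 (integrable_const _), integral_sub h2 i0, integral_const_mul,
      integral_const]
    simp [← ht]
  nlinarith [h0, hexp]

lemma bind_eq_snd_compProd (μ : Measure α) [SFinite μ] (k : Kernel α α) [IsMarkovKernel k] :
    μ.bind (fun x => k x) = (μ ⊗ₘ k).map Prod.snd := by
  ext s hs
  rw [Measure.bind_apply hs k.measurable.aemeasurable, Measure.map_apply measurable_snd hs,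
    Measure.compProd_apply (measurable_snd hs)]
  rfl

lemma bind_facts (μ : Measure α) [IsProbabilityMeasure μ] (k : Kernel α α) [IsMarkovKernel k]
    {F : α → ℝ} (hFi : Integrable F (μ.bind (fun x => k x))) :
    (∀ᵐ x ∂μ, Integrable F (k x)) ∧ Integrable (fun x => ∫ y, ‖F y‖ ∂k x) μ ∧
      ∫ y, F y ∂(μ.bind (fun x => k x)) = ∫ x, ∫ y, F y ∂k x ∂μ := by
  have hsnd := bind_eq_snd_compProd μ k
  have hFm : AEStronglyMeasurable F ((μ ⊗ₘ k).map Prod.snd) := hsnd ▸ hFi.aestronglyMeasurable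
  have hFm' : AEStronglyMeasurable (fun p : α × α => F p.2) (μ ⊗ₘ k) :=
    hFm.comp_aemeasurable measurable_snd.aemeasurable
  have hFi' : Integrable (fun p : α × α => F p.2) (μ ⊗ₘ k) :=
    (integrable_map_measure hFm measurable_snd.aemeasurable).mp (hsnd ▸ hFi)
  have h := (Measure.integrable_compProd_iff hFm').mp hFi'
  refine ⟨h.1, h.2, ?_⟩
  rw [hsnd, integral_map measurable_snd.aemeasurable hFm,
    Measure.integral_compProd hFi']

lemma key_estimate {X : Type*} [MeasurableSpace X]
    (μn μn1 : Measure X) [IsProbabilityMeasure μn] [IsProbabilityMeasure μn1]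
    (k : Kernel X X) [IsMarkovKernel k]
    (hcompat : μn1 = μn.bind (fun x => k x)) (c : ℝ)
    (hK : ∀ φ : X → ℝ, Measurable φ → MemLp φ 2 μn1 → ∫ x, φ x ∂μn1 = 0 →
      ∫ x, (∫ y, φ y ∂(k x)) ^ 2 ∂μn ≤ c ^ 2 * ∫ x, (φ x) ^ 2 ∂μn1)
    {F : X → ℝ} (hFm : Measurable F) (hF1 : Integrable F μn1)
    (hF2 : Integrable (fun y => F y ^ 2) μn1) :
    Integrable (fun x => (∫ y, F y ∂k x) ^ 2) μn ∧
      ∫ x, (∫ y, F y ∂k x) ^ 2 ∂μn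
        ≤ c ^ 2 * ∫ y, (F y - ∫ z, F z ∂μn1) ^ 2 ∂μn1 + (∫ z, F z ∂μn1) ^ 2 := by
  set t := ∫ z, F z ∂μn1 with ht
  set ψ : X → ℝ := fun y => F y - t with hψdef
  have hψm : Measurable ψ := hFm.sub measurable_const
  have hψ1 : Integrable ψ μn1 := hF1.sub (integrable_const t)
  have hψ2 : Integrable (fun y => ψ y ^ 2) μn1 := by
    have e : (fun y => ψ y ^ 2) = fun y => (F y ^ 2 - (2 * t) * F y) + t ^ 2 := by
      funext y; simp only [hψdef]; ring
    rw [e]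
    exact (hF2.sub (hF1.const_mul _)).add (integrable_const _)
  have hψmem : MemLp ψ 2 μn1 := (memLp_two_iff_integrable_sq hψm.aestronglyMeasurable).2 hψ2
  have hψ0 : ∫ y, ψ y ∂μn1 = 0 := by
    simp only [hψdef]
    rw [integral_sub hF1 (integrable_const t), integral_const]; simp [← ht]
  have hmain := hK ψ hψm hψmem hψ0
  obtain ⟨haeF, hnF, hiF⟩ := bind_facts μn k (hcompat ▸ hF1)
  obtain ⟨haeψ, hnψ, hiψ⟩ := bind_facts μn k (hcompat ▸ hψ1)
  obtain ⟨haeψ2, hnψ2, hiψ2⟩ := bind_facts μn k (hcompat ▸ hψ2)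
  set h : X → ℝ := fun x => ∫ y, ψ y ∂k x with hhdef
  have hhsm : StronglyMeasurable h := by
    have hu : StronglyMeasurable (Function.uncurry fun (_ : X) (y : X) => ψ y) :=
      (hψm.comp measurable_snd).stronglyMeasurable
    exact hu.integral_kernel_prod_right (κ := k)
  have hh1 : Integrable h μn := by
    refine hnψ.mono' hhsm.aestronglyMeasurable ?_
    filter_upwards with x
    exact norm_integral_le_integral_norm _
  have e2 : (fun x => ∫ y, ‖ψ y ^ 2‖ ∂k x) = fun x => ∫ y, ψ y ^ 2 ∂k x := by
    funext x
    simp [Real.norm_eq_abs, abs_pow, sq_abs]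
  rw [e2] at hnψ2
  have hh2 : Integrable (fun x => h x ^ 2) μn := by
    refine hnψ2.mono' ?_ ?_
    · have : StronglyMeasurable fun x => h x * h x := hhsm.mul hhsm
      simpa [pow_two] using this.aestronglyMeasurable
    · filter_upwards [haeψ, haeψ2] with x hx hx2
      have hj := sq_integral_le' (k x) hx hx2
      calc ‖h x ^ 2‖ = h x ^ 2 := by rw [Real.norm_eq_abs, abs_of_nonneg (sq_nonneg _)]
        _ ≤ ∫ y, ψ y ^ 2 ∂k x := hj
  have hcongr : (fun x => (∫ y, F y ∂k x) ^ 2) =ᵐ[μn] fun x => (h x + t) ^ 2 := by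
    filter_upwards [haeF] with x hx
    have hxe : h x = (∫ y, F y ∂k x) - t := by
      simp only [hhdef, hψdef]
      rw [integral_sub hx (integrable_const t), integral_const]; simp
    rw [hxe]; ring
  have hexp_int : Integrable (fun x => (h x + t) ^ 2) μn := by
    have e : (fun x => (h x + t) ^ 2) = fun x => (h x ^ 2 + (2 * t) * h x) + t ^ 2 := by
      funext x; ring
    rw [e]
    exact (hh2.add (hh1.const_mul _)).add (integrable_const _)
  have hIntLHS : Integrable (fun x => (∫ y, F y ∂k x) ^ 2) μn := hexp_int.congr hcongr.symm
  have hh0 : ∫ x, h x ∂μn = 0 := by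
    have h' := hiψ
    rw [← hcompat] at h'
    rw [hhdef, ← h', hψ0]
  have hval : ∫ x, (∫ y, F y ∂k x) ^ 2 ∂μn = ∫ x, h x ^ 2 ∂μn + t ^ 2 := by
    rw [integral_congr_ae hcongr]
    have e : ∀ x, (h x + t) ^ 2 = (h x ^ 2 + (2 * t) * h x) + t ^ 2 := fun x => by ring
    simp_rw [e]
    have i0 : Integrable (fun x => (2 * t) * h x) μn := hh1.const_mul _
    have i1 : Integrable (fun x => h x ^ 2 + 2 * t * h x) μn := hh2.add i0
    rw [integral_add i1 (integrable_const _), integral_add hh2 i0,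
      integral_const_mul, hh0, integral_const]
    simp
  refine ⟨hIntLHS, ?_⟩
  rw [hval]
  have : ∫ x, h x ^ 2 ∂μn ≤ c ^ 2 * ∫ y, ψ y ^ 2 ∂μn1 := hmain
  have hrhs : ∫ y, (F y - t) ^ 2 ∂μn1 = ∫ y, ψ y ^ 2 ∂μn1 := rfl
  rw [hrhs]
  linarith

end AuxHelpers

/-- If `‖K̂ₙ f‖² ≥ (1-ε)‖f‖²` and `‖Kₙ⁰‖ ≤ c < 1`, then
`‖P_{n+1} f‖² ≤ (ε/(1-c²))‖f‖²`, equivalently `‖Q_{n+1} f‖² ≥ (1 - ε/(1-c²))‖f‖²`. -/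
theorem stmt16 (m : ℕ) (X : Type*) [MeasurableSpace X]
    (μn μn1 : Measure X) [IsProbabilityMeasure μn] [IsProbabilityMeasure μn1]
    (k : Kernel X X) [IsMarkovKernel k]
    (hcompat : μn1 = μn.bind (fun x => k x))
    (c : ℝ) (hc0 : 0 ≤ c) (hc1 : c < 1)
    (hK : ∀ φ : X → ℝ, Measurable φ → MemLp φ 2 μn1 → ∫ x, φ x ∂μn1 = 0 →
      ∫ x, (∫ y, φ y ∂(k x)) ^ 2 ∂μn ≤ c ^ 2 * ∫ x, (φ x) ^ 2 ∂μn1)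
    (ε : ℝ) (hε0 : 0 ≤ ε) (hε1 : ε ≤ 1)
    (f : X × Sph m → ℝ) (hf : Measurable f) (hf2 : MemLp f 2 (μn1.prod (sphμ m)))
    (hlow : ∫ p, (∫ y, f (y, p.2) ∂(k p.1)) ^ 2 ∂(μn.prod (sphμ m))
      ≥ (1 - ε) * ∫ p, (f p) ^ 2 ∂(μn1.prod (sphμ m))) :
    ∫ p, (f p - ∫ y, f (y, p.2) ∂μn1) ^ 2 ∂(μn1.prod (sphμ m))
        ≤ (ε / (1 - c ^ 2)) * ∫ p, (f p) ^ 2 ∂(μn1.prod (sphμ m)) ∧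
      ∫ p, (∫ y, f (y, p.2) ∂μn1) ^ 2 ∂(μn1.prod (sphμ m))
        ≥ (1 - ε / (1 - c ^ 2)) * ∫ p, (f p) ^ 2 ∂(μn1.prod (sphμ m)) := by
  classical
  haveI hfin : IsFiniteMeasure (sphμ m) := by
    constructor
    simp only [sphμ, Measure.smul_apply, smul_eq_mul]
    rcases eq_or_ne ((volume : Measure (EuclideanSpace ℝ (Fin m))).toSphere Set.univ) 0 with h | h
    · simp [h]
    · rw [ENNReal.inv_mul_cancel h (measure_ne_top _ _)]
      exact ENNReal.one_lt_top
  set ν : Measure (Sph m) := sphμ m with hνdef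
  set g : Sph m → ℝ := fun u => ∫ y, f (y, u) ∂μn1 with hgdef
  set K : X × Sph m → ℝ := fun p => ∫ y, f (y, p.2) ∂(k p.1) with hKdef
  have hgsm : StronglyMeasurable g := hf.stronglyMeasurable.integral_prod_left'
  have hfsq : Integrable (fun p => f p ^ 2) (μn1.prod ν) := hf2.integrable_sq
  have hfint : Integrable f (μn1.prod ν) := hf2.integrable one_le_two
  have hae1 : ∀ᵐ u ∂ν, Integrable (fun y => f (y, u)) μn1 := hfint.prod_left_ae
  have hae2 : ∀ᵐ u ∂ν, Integrable (fun y => f (y, u) ^ 2) μn1 := hfsq.prod_left_ae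
  have hIsq : Integrable (fun u => ∫ y, f (y, u) ^ 2 ∂μn1) ν := hfsq.integral_prod_right
  have hgsq : Integrable (fun u => g u ^ 2) ν := by
    refine hIsq.mono' ?_ ?_
    · have h' : StronglyMeasurable fun u => g u * g u := hgsm.mul hgsm
      simpa [pow_two] using h'.aestronglyMeasurable
    · filter_upwards [hae1, hae2] with u h1 h2
      have hj := sq_integral_le' μn1 h1 h2
      calc ‖g u ^ 2‖ = g u ^ 2 := by rw [Real.norm_eq_abs, abs_of_nonneg (sq_nonneg _)]
        _ ≤ _ := hj
  set T := ∫ p, f p ^ 2 ∂(μn1.prod ν) with hTdef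
  set Gν := ∫ u, g u ^ 2 ∂ν with hGdef
  have hT : T = ∫ u, ∫ y, f (y, u) ^ 2 ∂μn1 ∂ν := integral_prod_symm _ hfsq
  have hGprod : ∫ p, (g p.2) ^ 2 ∂(μn1.prod ν) = Gν := by
    have h' := integral_fun_snd (μ := μn1) (ν := ν) (fun u => g u ^ 2)
    simpa [measure_univ] using h'
  have hmap : (μn1.prod ν).map Prod.snd = ν := by
    rw [Measure.map_snd_prod, measure_univ, one_smul]
  have hgsq_prod : Integrable (fun p : X × Sph m => g p.2 ^ 2) (μn1.prod ν) := by
    have h1 : AEStronglyMeasurable (fun u => g u ^ 2) ((μn1.prod ν).map Prod.snd) := by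
      rw [hmap]; exact hgsq.aestronglyMeasurable
    have h2 : Integrable (fun u => g u ^ 2) ((μn1.prod ν).map Prod.snd) := by
      rw [hmap]; exact hgsq
    exact (integrable_map_measure h1 measurable_snd.aemeasurable).mp h2
  have hcross : Integrable (fun p => f p * g p.2) (μn1.prod ν) := by
    have hb : Integrable (fun p : X × Sph m => (f p ^ 2 + g p.2 ^ 2) / 2) (μn1.prod ν) :=
      (hfsq.add hgsq_prod).div_const 2
    refine hb.mono' (hfint.aestronglyMeasurable.mul
      ((hgsm.comp_measurable measurable_snd).aestronglyMeasurable)) ?_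
    filter_upwards with p
    rw [Real.norm_eq_abs, abs_mul]
    nlinarith [abs_nonneg (f p), abs_nonneg (g p.2), sq_abs (f p), sq_abs (g p.2),
      sq_nonneg (|f p| - |g p.2|)]
  have hC : ∫ p, f p * g p.2 ∂(μn1.prod ν) = Gν := by
    rw [integral_prod_symm _ hcross, hGdef]
    refine integral_congr_ae ?_
    filter_upwards [hae1] with u hu
    rw [integral_mul_const]
    have h' : ∫ x, f (x, u) ∂μn1 = g u := rfl
    rw [h', pow_two]
  have hPhi : ∫ p, (f p - g p.2) ^ 2 ∂(μn1.prod ν) = T - Gν := by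
    have e : ∀ p : X × Sph m,
        (f p - g p.2) ^ 2 = (f p ^ 2 - 2 * (f p * g p.2)) + g p.2 ^ 2 := fun p => by ring
    simp_rw [e]
    have i0 : Integrable (fun p => 2 * (f p * g p.2)) (μn1.prod ν) := hcross.const_mul 2
    have i1 : Integrable (fun p => f p ^ 2 - 2 * (f p * g p.2)) (μn1.prod ν) := hfsq.sub i0
    rw [integral_add i1 hgsq_prod, integral_sub hfsq i0, integral_const_mul, hC, hGprod]
    ring
  have hptwise : ∀ᵐ u ∂ν, Integrable (fun x => (∫ y, f (y, u) ∂k x) ^ 2) μn ∧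
      ∫ x, (∫ y, f (y, u) ∂k x) ^ 2 ∂μn
        ≤ c ^ 2 * ∫ y, (f (y, u) - g u) ^ 2 ∂μn1 + g u ^ 2 := by
    filter_upwards [hae1, hae2] with u h1 h2
    have hFm : Measurable fun y => f (y, u) := hf.comp (measurable_id.prodMk measurable_const)
    exact key_estimate μn μn1 k hcompat c hK hFm h1 h2
  set A : Sph m → ℝ := fun u => ∫ y, (f (y, u) - g u) ^ 2 ∂μn1 with hAdef
  have hA_eq : ∀ᵐ u ∂ν, A u = (∫ y, f (y, u) ^ 2 ∂μn1) - g u ^ 2 := by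
    filter_upwards [hae1, hae2] with u h1 h2
    have e : ∀ y, (f (y, u) - g u) ^ 2
        = (f (y, u) ^ 2 - (2 * g u) * f (y, u)) + g u ^ 2 := fun y => by ring
    simp only [hAdef]
    simp_rw [e]
    have i0 : Integrable (fun y => (2 * g u) * f (y, u)) μn1 := h1.const_mul _
    have i1 : Integrable (fun y => f (y, u) ^ 2 - (2 * g u) * f (y, u)) μn1 := h2.sub i0
    rw [integral_add i1 (integrable_const _), integral_sub h2 i0, integral_const_mul,
      integral_const]
    have h' : ∫ y, f (y, u) ∂μn1 = g u := rfl
    rw [h']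
    simp [measure_univ]
    ring
  have hAint : Integrable A ν :=
    (hIsq.sub hgsq).congr (by filter_upwards [hA_eq] with u hu using hu.symm)
  have hAval : ∫ u, A u ∂ν = T - Gν := by
    rw [integral_congr_ae hA_eq, integral_sub hIsq hgsq, ← hT, hGdef]
  have hAnonneg : ∀ u, 0 ≤ A u := fun u => integral_nonneg fun y => sq_nonneg _
  set R : Sph m → ℝ := fun u => c ^ 2 * A u + g u ^ 2 with hRdef
  have hRint : Integrable R ν := (hAint.const_mul _).add hgsq
  have hRnonneg : 0 ≤ᵐ[ν] R := Filter.Eventually.of_forall fun u =>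
    add_nonneg (mul_nonneg (sq_nonneg c) (hAnonneg u)) (sq_nonneg _)
  have hRval : ∫ u, R u ∂ν = c ^ 2 * (T - Gν) + Gν := by
    simp only [hRdef]
    rw [integral_add (hAint.const_mul _) hgsq, integral_const_mul, hAval, ← hGdef]
  have hKsm : StronglyMeasurable K := by
    have h1 : StronglyMeasurable (Function.uncurry fun (p : X × Sph m) (y : X) => f (y, p.2)) := by
      apply Measurable.stronglyMeasurable
      exact hf.comp (measurable_snd.prodMk measurable_fst.snd)
    have h2 := h1.integral_kernel_prod_right (κ := Kernel.prodMkRight (Sph m) k)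
    simpa [Kernel.prodMkRight_apply] using h2
  have hL : ∫ p, K p ^ 2 ∂(μn.prod ν) ≤ ∫ u, R u ∂ν := by
    have hKsq_sm : AEStronglyMeasurable (fun p => K p ^ 2) (μn.prod ν) := by
      have h' : StronglyMeasurable fun p => K p * K p := hKsm.mul hKsm
      simpa [pow_two] using h'.aestronglyMeasurable
    rw [integral_eq_lintegral_of_nonneg_ae
      (Filter.Eventually.of_forall fun p => sq_nonneg _) hKsq_sm]
    have hswap : ∫⁻ p, ENNReal.ofReal (K p ^ 2) ∂(μn.prod ν)
        = ∫⁻ u, ∫⁻ x, ENNReal.ofReal (K (x, u) ^ 2) ∂μn ∂ν := by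
      refine lintegral_prod_symm _ ?_
      exact (ENNReal.measurable_ofReal.comp (hKsm.measurable.pow_const 2)).aemeasurable
    rw [hswap]
    have hbound : ∫⁻ u, ∫⁻ x, ENNReal.ofReal (K (x, u) ^ 2) ∂μn ∂ν
        ≤ ∫⁻ u, ENNReal.ofReal (R u) ∂ν := by
      refine lintegral_mono_ae ?_
      filter_upwards [hptwise] with u hu
      obtain ⟨hint, hineq⟩ := hu
      have h' : ∫⁻ x, ENNReal.ofReal (K (x, u) ^ 2) ∂μn
          = ENNReal.ofReal (∫ x, K (x, u) ^ 2 ∂μn) :=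
        (ofReal_integral_eq_lintegral_ofReal hint
          (Filter.Eventually.of_forall fun x => sq_nonneg _)).symm
      rw [h']
      exact ENNReal.ofReal_le_ofReal hineq
    have hfinal : ∫⁻ u, ENNReal.ofReal (R u) ∂ν = ENNReal.ofReal (∫ u, R u ∂ν) :=
      (ofReal_integral_eq_lintegral_ofReal hRint hRnonneg).symm
    calc (∫⁻ u, ∫⁻ x, ENNReal.ofReal (K (x, u) ^ 2) ∂μn ∂ν).toReal
        ≤ (ENNReal.ofReal (∫ u, R u ∂ν)).toReal := by
          apply ENNReal.toReal_mono ENNReal.ofReal_ne_top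
          rw [← hfinal]; exact hbound
      _ = ∫ u, R u ∂ν := ENNReal.toReal_ofReal (integral_nonneg_of_ae hRnonneg)
  have hlow' : (1 - ε) * T ≤ ∫ p, K p ^ 2 ∂(μn.prod ν) := hlow
  have hc2 : (0:ℝ) < 1 - c ^ 2 := by nlinarith
  have hmainineq : (1 - c ^ 2) * (T - Gν) ≤ ε * T := by
    have h' := le_trans hlow' (le_trans hL (le_of_eq hRval))
    nlinarith [h']
  have hT0 : (0:ℝ) ≤ T := integral_nonneg fun p => sq_nonneg _
  have hPhi0 : (0:ℝ) ≤ T - Gν := hPhi ▸ integral_nonneg fun p => sq_nonneg _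
  constructor
  · show ∫ p, (f p - g p.2) ^ 2 ∂(μn1.prod ν) ≤ ε / (1 - c ^ 2) * T
    rw [hPhi, div_mul_eq_mul_div, le_div_iff₀ hc2]
    linarith [hmainineq]
  · show ∫ p, (g p.2) ^ 2 ∂(μn1.prod ν) ≥ (1 - ε / (1 - c ^ 2)) * T
    rw [hGprod]
    have h1 : T - Gν ≤ ε / (1 - c ^ 2) * T := by
      rw [div_mul_eq_mul_div, le_div_iff₀ hc2]; linarith [hmainineq]
    linarith


end
end

section
/- Let k_1(x,dy),...,k_r(x,dy) be Markov kernels on a measurable space X with compatible marginals mu_1,...,mu_{r+1} (i.e., mu_{j+1} = mu_j k_j), and suppose the restriction of the first transition operator K_1 to mean-zero functions in L^2(mu_2) has norm at most c < 1. Consider the composed chain step: for f in L^2 of the product measure mu_2(dy_1) k_2(y_1,dy_2)...k_r(y_{r-1},dy_r) on X^r with ∫ f d(product measure) = 0, define (K~ f)(x) = ∫ k_1(x,dy_1) k_2(y_1,dy_2)...k_r(y_{r-1},dy_r) f(y_1,...,y_r). Then ||K~ f||_{L^2(mu_1)} <= c ||f||. -/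
open MeasureTheory ProbabilityTheory
open scoped ENNReal

noncomputable section

def mChain {X : Type*} [MeasurableSpace X] (k : ℕ → Kernel X X) :
    ℕ → ℕ → X → (ℕ → X) → Measure (ℕ → X)
  | 0, _, _, acc => Measure.dirac acc
  | (c + 1), j, x, acc =>
      ((k j) x).bind (fun y => mChain k c (j + 1) y (Function.update acc j y))

namespace MChainAux

variable {X : Type*} [MeasurableSpace X]

lemma measurable_pair_update (j : ℕ) :
    Measurable (fun p : X × (ℕ → X) => (p.1, Function.update p.2 j p.1)) := by
  refine measurable_fst.prodMk (measurable_pi_lambda _ fun i => ?_)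
  simp only [Function.update_apply]
  by_cases h : i = j
  · simp only [h, if_pos rfl]; exact measurable_fst
  · simp only [if_neg h]; exact (measurable_pi_apply i).comp measurable_snd

lemma measurable_update_fun (j : ℕ) (acc : ℕ → X) :
    Measurable (fun y : X => Function.update acc j y) := by
  refine measurable_pi_lambda _ fun i => ?_
  simp only [Function.update_apply]
  by_cases h : i = j
  · simp only [h, if_pos rfl]; exact measurable_id
  · simp only [if_neg h]; exact measurable_const

lemma measurable_single_update (j : ℕ) (acc : ℕ → X) :
    Measurable (fun y : X => (y, Function.update acc j y)) :=
  measurable_id.prodMk (measurable_update_fun j acc)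

def mStep (k : ℕ → Kernel X X) (j : ℕ) : Kernel (X × (ℕ → X)) (X × (ℕ → X)) :=
  Kernel.map (((k j).prodMkRight (ℕ → X)).prod (Kernel.deterministic Prod.snd measurable_snd))
    (fun p => (p.1, Function.update p.2 j p.1))

variable (k : ℕ → Kernel X X) [∀ j, IsMarkovKernel (k j)]

lemma mStep_apply (j : ℕ) (x : X) (acc : ℕ → X) :
    mStep k j (x, acc) = ((k j) x).map (fun y => (y, Function.update acc j y)) := by
  rw [mStep, Kernel.map_apply _ (measurable_pair_update j), Kernel.prod_apply,
    Kernel.prodMkRight_apply, Kernel.deterministic_apply, Measure.prod_dirac,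
    Measure.map_map (measurable_pair_update j) measurable_prodMk_right]
  rfl

instance mStep_markov (j : ℕ) : IsMarkovKernel (mStep k j) :=
  Kernel.IsMarkovKernel.map _ (measurable_pair_update j)

def mKer : ℕ → ℕ → Kernel (X × (ℕ → X)) (ℕ → X)
  | 0, _ => Kernel.deterministic Prod.snd measurable_snd
  | (c + 1), j => (mKer c (j + 1)) ∘ₖ (mStep k j)

instance mKer_markov : ∀ c j, IsMarkovKernel (mKer k c j)
  | 0, _ => by rw [mKer]; infer_instance
  | (c + 1), j => by
    rw [mKer]
    haveI := mKer_markov c (j + 1)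
    infer_instance

lemma mKer_apply : ∀ c j (x : X) (acc : ℕ → X), mKer k c j (x, acc) = mChain k c j x acc
  | 0, j, x, acc => by rw [mKer, Kernel.deterministic_apply, mChain]
  | (c + 1), j, x, acc => by
    rw [mKer, Kernel.comp_apply, mStep_apply, mChain,
      ← Measure.bind_dirac_eq_map _ (measurable_single_update j acc),
      Measure.bind_bind
        (show Measurable fun y : X => Measure.dirac (y, Function.update acc j y) from
          Measure.measurable_dirac.comp (measurable_single_update j acc)).aemeasurable
        (Kernel.measurable _).aemeasurable]
    refine congrArg _ (funext fun y => ?_)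
    rw [Measure.dirac_bind (Kernel.measurable _), mKer_apply c (j + 1) y _]

lemma measurable_mChain_fam (c j : ℕ) (g : X → ℕ → X) (hg : Measurable g) :
    Measurable fun y : X => mChain k c j y (g y) := by
  have h : (fun y : X => mChain k c j y (g y)) = fun y => mKer k c j (y, g y) :=
    funext fun y => (mKer_apply k c j y (g y)).symm
  rw [h]
  exact (Kernel.measurable _).comp (measurable_id.prodMk hg)

lemma mChain_prob (c j : ℕ) (x : X) (acc : ℕ → X) :
    IsProbabilityMeasure (mChain k c j x acc) := by
  rw [← mKer_apply]
  haveI := mKer_markov k c j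
  infer_instance

def trunc (j c : ℕ) (acc v : ℕ → X) : ℕ → X := fun i => if j ≤ i ∧ i < j + c then v i else acc i

lemma measurable_trunc (j c : ℕ) (acc : ℕ → X) : Measurable (trunc j c acc) := by
  refine measurable_pi_lambda _ fun i => ?_
  by_cases h : j ≤ i ∧ i < j + c
  · simp only [trunc, if_pos h]; exact measurable_pi_apply i
  · simp only [trunc, if_neg h]; exact measurable_const

lemma map_bind' {α β γ : Type*} [MeasurableSpace α] [MeasurableSpace β] [MeasurableSpace γ]
    (m : Measure α) {f : α → Measure β} {g : β → γ} (hf : Measurable f) (hg : Measurable g) :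
    (m.bind f).map g = m.bind (fun a => (f a).map g) := by
  rw [Measure.bind, Measure.bind, ← Measure.join_map_map hg,
    Measure.map_map (Measure.measurable_map _ hg) hf]
  rfl

lemma mChain_eq_map : ∀ c j (x : X) (acc acc₀ : ℕ → X),
    mChain k c j x acc = (mChain k c j x acc₀).map (trunc j c acc)
  | 0, j, x, acc, acc₀ => by
    rw [mChain, mChain, Measure.map_dirac' (measurable_trunc j 0 acc)]
    congr 1
    funext i
    simp only [trunc]
    rw [if_neg (by omega)]
  | (c + 1), j, x, acc, acc₀ => by
    rw [mChain, mChain,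
      map_bind' _ (measurable_mChain_fam k c (j + 1) _ (measurable_update_fun j acc₀))
        (measurable_trunc j (c + 1) acc)]
    refine congrArg _ (funext fun y => ?_)
    have hfun : trunc j (c + 1) acc ∘ trunc (j + 1) c (Function.update acc₀ j y)
        = trunc (j + 1) c (Function.update acc j y) := by
      funext v i
      simp only [Function.comp_apply, trunc, Function.update_apply]
      split_ifs <;> first | rfl | omega
    calc mChain k c (j + 1) y (Function.update acc j y)
        = (mChain k c (j + 1) y (Function.update acc₀ j y)).map
            (trunc (j + 1) c (Function.update acc j y)) :=
          mChain_eq_map c (j + 1) y _ _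
      _ = ((mChain k c (j + 1) y (Function.update acc₀ j y)).map
            (trunc (j + 1) c (Function.update acc₀ j y))).map (trunc j (c + 1) acc) := by
          rw [Measure.map_map (measurable_trunc _ _ _) (measurable_trunc _ _ _), hfun]
      _ = (mChain k c (j + 1) y (Function.update acc₀ j y)).map (trunc j (c + 1) acc) := by
          rw [← mChain_eq_map c (j + 1) y _ _]

lemma lintegral_mChain_succ (c j : ℕ) (x : X) (acc : ℕ → X) {G : (ℕ → X) → ℝ≥0∞}
    (hG : Measurable G) :
    ∫⁻ v, G v ∂(mChain k (c + 1) j x acc)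
      = ∫⁻ y, ∫⁻ v, G v ∂(mChain k c (j + 1) y (Function.update acc j y)) ∂((k j) x) := by
  rw [mChain]
  exact Measure.lintegral_bind (measurable_mChain_fam k c (j + 1) _ (measurable_update_fun j acc)).aemeasurable
    hG.aemeasurable

lemma integral_bind'' {α β : Type*} [MeasurableSpace α] [MeasurableSpace β]
    (m : Measure α) [SFinite m] {f : α → Measure β} (hf : Measurable f)
    (hprob : ∀ a, IsProbabilityMeasure (f a)) {g : β → ℝ} (hg : Measurable g)
    (hint : Integrable g (m.bind f)) :
    ∫ b, g b ∂(m.bind f) = ∫ a, ∫ b, g b ∂(f a) ∂m := by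
  set κ : Kernel α β := ⟨f, hf⟩ with hκ
  haveI : IsMarkovKernel κ := ⟨hprob⟩
  have hbind : m.bind f = (m.compProd κ).map Prod.snd := by
    ext s hs
    rw [Measure.map_apply measurable_snd hs, Measure.bind_apply hs hf.aemeasurable,
      Measure.compProd_apply (measurable_snd hs)]
    rfl
  have hint2 : Integrable (fun p : α × β => g p.2) (m.compProd κ) := by
    rw [hbind] at hint
    exact (integrable_map_measure hg.aestronglyMeasurable measurable_snd.aemeasurable).mp hint
  rw [hbind, integral_map measurable_snd.aemeasurable hg.aestronglyMeasurable,
    Measure.integral_compProd hint2]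
  rfl

end MChainAux

/-- Contraction of the composed chain step: if `‖K₁⁰‖ ≤ c < 1` on mean-zero functions in
`L²(μ₂)`, then for `f` mean-zero and square-integrable with respect to the trajectory measure
`μ₂(dy₁)k₂(y₁,dy₂)⋯k_r(y_{r-1},dy_r)`, the composed operator
`(K̃ f)(x) = ∫ k₁(x,dy₁)k₂(y₁,dy₂)⋯k_r(y_{r-1},dy_r) f(y₁,…,y_r)` satisfies
`‖K̃ f‖_{L²(μ₁)} ≤ c ‖f‖`. -/
theorem stmt19 (X : Type*) [MeasurableSpace X] (r : ℕ) (hr : 1 ≤ r)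
    (k : ℕ → Kernel X X) [∀ j, IsMarkovKernel (k j)]
    (μ : ℕ → Measure X) (hprob : ∀ j, IsProbabilityMeasure (μ j))
    (hcompat : ∀ j, 1 ≤ j → j ≤ r → μ (j + 1) = (μ j).bind (fun x => (k j) x))
    (c : ℝ) (hc0 : 0 ≤ c) (hc1 : c < 1)
    (hK : ∀ φ : X → ℝ, Measurable φ → MemLp φ 2 (μ 2) → ∫ x, φ x ∂(μ 2) = 0 →
      ∫ x, (∫ y, φ y ∂((k 1) x)) ^ 2 ∂(μ 1) ≤ c ^ 2 * ∫ x, (φ x) ^ 2 ∂(μ 2))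
    (F : (ℕ → X) → ℝ) (hF : Measurable F)
    (hdep : ∀ a b : ℕ → X, (∀ i, 1 ≤ i → i ≤ r → a i = b i) → F a = F b)
    (ρ : Measure (ℕ → X))
    (hρ : ρ = (μ 2).bind (fun y₁ => mChain k (r - 1) 2 y₁ (fun _ => y₁)))
    (hF2 : MemLp F 2 ρ) (hmean : ∫ v, F v ∂ρ = 0) :
    ∫ x, (∫ v, F v ∂(mChain k r 1 x (fun _ => x))) ^ 2 ∂(μ 1)
      ≤ c ^ 2 * ∫ v, (F v) ^ 2 ∂ρ := by
  classical
  obtain ⟨q, rfl⟩ : ∃ q, r = q + 1 := ⟨r - 1, by omega⟩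
  haveI := hprob 1
  haveI := hprob 2
  open MChainAux in
  set ν : X → Measure (ℕ → X) := fun y => mChain k q 2 y (fun _ => y) with hν
  have hρbind : ρ = (μ 2).bind ν := by
    rw [hρ, Nat.add_sub_cancel]
  have hνmeas : Measurable ν :=
    MChainAux.measurable_mChain_fam k q 2 _ (measurable_pi_lambda _ fun _ => measurable_id)
  have hνprob : ∀ y, IsProbabilityMeasure (ν y) := fun y => MChainAux.mChain_prob k q 2 y _
  set κν : Kernel X (ℕ → X) := ⟨ν, hνmeas⟩ with hκν
  haveI : IsMarkovKernel κν := ⟨hνprob⟩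
  set φ : X → ℝ := fun y => ∫ v, F v ∂(ν y) with hφ
  have hφm : Measurable φ := by
    have h := MeasureTheory.StronglyMeasurable.integral_kernel_prod_right (κ := κν)
      (f := fun _ v => F v) (hF.comp measurable_snd).stronglyMeasurable
    exact h.measurable
  set G : (ℕ → X) → ℝ≥0∞ := fun v => ENNReal.ofReal ((F v) ^ 2) with hG
  have hGm : Measurable G := (hF.pow_const 2).ennreal_ofReal
  set Λ : X → ℝ≥0∞ := fun y => ∫⁻ v, G v ∂(ν y) with hΛ
  have hΛm : Measurable Λ :=
    Measurable.lintegral_kernel_prod_right (κ := κν) (f := fun _ v => G v)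
      (hGm.comp measurable_snd)
  haveI hρprob : IsProbabilityMeasure ρ := by
    constructor
    rw [hρbind, Measure.bind_apply MeasurableSet.univ hνmeas.aemeasurable]
    simp [fun y => (hνprob y).measure_univ]
  have hFint : Integrable F ρ := hF2.integrable one_le_two
  have hFsq : Integrable (fun v => (F v) ^ 2) ρ := hF2.integrable_sq
  have hGρ : ∫⁻ v, G v ∂ρ < ∞ := hFsq.lintegral_lt_top
  have hΛint : ∫⁻ y, Λ y ∂(μ 2) = ∫⁻ v, G v ∂ρ := by
    rw [hρbind, Measure.lintegral_bind hνmeas.aemeasurable hGm.aemeasurable]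
  have hφ0 : ∫ y, φ y ∂(μ 2) = 0 := by
    have h := MChainAux.integral_bind'' (μ 2) hνmeas hνprob hF (hρbind ▸ hFint)
    rw [← hρbind] at h
    rw [← h, hmean]
  -- pointwise Cauchy-Schwarz bound
  have hpt : ∀ y : X, ENNReal.ofReal ((φ y) ^ 2) ≤ Λ y := by
    intro y
    by_cases hfin : Λ y = ∞
    · rw [hfin]; exact le_top
    · haveI := hνprob y
      have hsq : Integrable (fun v => (F v) ^ 2) (ν y) := by
        refine ⟨(hF.pow_const 2).aestronglyMeasurable, ?_⟩
        rw [HasFiniteIntegral]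
        have he : ∀ v, (‖(F v) ^ 2‖₊ : ℝ≥0∞) = G v := fun v => by
          rw [← enorm_eq_nnnorm, ← ofReal_norm, Real.norm_of_nonneg (sq_nonneg _)]
        calc ∫⁻ v, (‖(F v) ^ 2‖₊ : ℝ≥0∞) ∂(ν y) = ∫⁻ v, G v ∂(ν y) :=
              lintegral_congr fun v => he v
          _ < ∞ := Ne.lt_top hfin
      have hmem : MemLp F 2 (ν y) := (memLp_two_iff_integrable_sq hF.aestronglyMeasurable).2 hsq
      have hintF : Integrable F (ν y) := hmem.integrable one_le_two
      have hexp : ∫ v, ((F v) - φ y) ^ 2 ∂(ν y) = (∫ v, (F v) ^ 2 ∂(ν y)) - (φ y) ^ 2 := by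
        have h1 : ∀ v : ℕ → X, ((F v) - φ y) ^ 2
            = ((F v) ^ 2 - (2 * φ y) * (F v)) + (φ y) ^ 2 := fun v => by ring
        simp_rw [h1]
        have hint1 : Integrable (fun v => F v ^ 2 - 2 * φ y * F v) (ν y) :=
          hsq.sub (hintF.const_mul (2 * φ y))
        have hint2 : Integrable (fun v => 2 * φ y * F v) (ν y) := hintF.const_mul (2 * φ y)
        rw [integral_add hint1 (integrable_const _), integral_sub hsq hint2,
          integral_const_mul, integral_const]
        simp only [measure_univ, probReal_univ, ENNReal.toReal_one, smul_eq_mul, one_mul]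
        have : ∫ v, F v ∂(ν y) = φ y := rfl
        rw [this]; ring
      have hvar : 0 ≤ ∫ v, ((F v) - φ y) ^ 2 ∂(ν y) := integral_nonneg fun v => sq_nonneg _
      have hcs : (φ y) ^ 2 ≤ ∫ v, (F v) ^ 2 ∂(ν y) := by rw [hexp] at hvar; linarith
      calc ENNReal.ofReal ((φ y) ^ 2) ≤ ENNReal.ofReal (∫ v, (F v) ^ 2 ∂(ν y)) :=
            ENNReal.ofReal_le_ofReal hcs
        _ = ∫⁻ v, ENNReal.ofReal ((F v) ^ 2) ∂(ν y) :=
            ofReal_integral_eq_lintegral_ofReal hsq (Filter.Eventually.of_forall fun v => sq_nonneg _)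
        _ = Λ y := rfl
  have hφlint : ∫⁻ y, ENNReal.ofReal ((φ y) ^ 2) ∂(μ 2) ≤ ∫⁻ v, G v ∂ρ := by
    refine le_trans (lintegral_mono hpt) (le_of_eq hΛint)
  have hφsq : Integrable (fun y => (φ y) ^ 2) (μ 2) := by
    refine ⟨(hφm.pow_const 2).aestronglyMeasurable, ?_⟩
    rw [HasFiniteIntegral]
    have he : ∀ v, (‖(φ v) ^ 2‖₊ : ℝ≥0∞) = ENNReal.ofReal ((φ v) ^ 2) := fun v => by
      rw [← enorm_eq_nnnorm, ← ofReal_norm, Real.norm_of_nonneg (sq_nonneg _)]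
    calc ∫⁻ y, (‖(φ y) ^ 2‖₊ : ℝ≥0∞) ∂(μ 2) = ∫⁻ y, ENNReal.ofReal ((φ y) ^ 2) ∂(μ 2) :=
          lintegral_congr fun v => he v
      _ ≤ ∫⁻ v, G v ∂ρ := hφlint
      _ < ∞ := hGρ
  have hφmem : MemLp φ 2 (μ 2) := (memLp_two_iff_integrable_sq hφm.aestronglyMeasurable).2 hφsq
  have hφ2le : ∫ y, (φ y) ^ 2 ∂(μ 2) ≤ ∫ v, (F v) ^ 2 ∂ρ := by
    rw [integral_eq_lintegral_of_nonneg_ae (Filter.Eventually.of_forall fun y => sq_nonneg _)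
        (hφm.pow_const 2).aestronglyMeasurable,
      integral_eq_lintegral_of_nonneg_ae (Filter.Eventually.of_forall fun v => sq_nonneg _)
        (hF.pow_const 2).aestronglyMeasurable]
    exact ENNReal.toReal_mono hGρ.ne hφlint
  have hKφ := hK φ hφm hφmem hφ0
  -- identify the inner integrals
  have hdepT : ∀ (x y : X) (v : ℕ → X),
      F (MChainAux.trunc 2 q (Function.update (fun _ => x) 1 y) v)
        = F (MChainAux.trunc 2 q (fun _ => y) v) := by
    intro x y v
    apply hdep
    intro i hi1 hi2
    simp only [MChainAux.trunc]
    by_cases h : 2 ≤ i ∧ i < 2 + q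
    · rw [if_pos h, if_pos h]
    · rw [if_neg h, if_neg h]
      have hi : i = 1 := by omega
      subst hi
      simp [Function.update_apply]
  have key : ∀ (A : ℕ → X) (y : X),
      ∫ v, F v ∂(mChain k q 2 y A) = ∫ v, F (MChainAux.trunc 2 q A v) ∂(ν y) := by
    intro A y
    rw [MChainAux.mChain_eq_map k q 2 y A (fun _ => y),
      integral_map (MChainAux.measurable_trunc _ _ _).aemeasurable hF.aestronglyMeasurable]
  have keyl : ∀ (A : ℕ → X) (y : X),
      ∫⁻ v, G v ∂(mChain k q 2 y A) = ∫⁻ v, G (MChainAux.trunc 2 q A v) ∂(ν y) := by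
    intro A y
    rw [MChainAux.mChain_eq_map k q 2 y A (fun _ => y),
      lintegral_map hGm (MChainAux.measurable_trunc _ _ _)]
  have hW : ∀ x y : X,
      ∫ v, F v ∂(mChain k q 2 y (Function.update (fun _ => x) 1 y)) = φ y := by
    intro x y
    rw [key (Function.update (fun _ => x) 1 y) y,
      show φ y = ∫ v, F (MChainAux.trunc 2 q (fun _ => y) v) ∂(ν y) from key (fun _ => y) y]
    exact integral_congr_ae (Filter.Eventually.of_forall fun v => hdepT x y v)
  have hWl : ∀ x y : X,
      ∫⁻ v, G v ∂(mChain k q 2 y (Function.update (fun _ => x) 1 y)) = Λ y := by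
    intro x y
    rw [keyl (Function.update (fun _ => x) 1 y) y,
      show Λ y = ∫⁻ v, G (MChainAux.trunc 2 q (fun _ => y) v) ∂(ν y) from keyl (fun _ => y) y]
    exact lintegral_congr fun v => by simp only [hG]; rw [hdepT x y v]
  have e1 : ∀ x : X, ∫⁻ v, G v ∂(mChain k (q + 1) 1 x (fun _ => x)) = ∫⁻ y, Λ y ∂((k 1) x) := by
    intro x
    rw [MChainAux.lintegral_mChain_succ k q 1 x _ hGm]
    exact lintegral_congr fun y => hWl x y
  have hmx : Measurable fun x : X => ∫⁻ v, G v ∂(mChain k (q + 1) 1 x (fun _ => x)) := by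
    have h : (fun x : X => ∫⁻ v, G v ∂(mChain k (q + 1) 1 x (fun _ => x)))
        = fun x => ∫⁻ y, Λ y ∂((k 1) x) := funext e1
    rw [h]
    exact Measurable.lintegral_kernel_prod_right (κ := k 1) (f := fun _ y => Λ y)
      (hΛm.comp measurable_snd)
  have hL : ∫⁻ x, (∫⁻ v, G v ∂(mChain k (q + 1) 1 x (fun _ => x))) ∂(μ 1) = ∫⁻ v, G v ∂ρ := by
    calc ∫⁻ x, (∫⁻ v, G v ∂(mChain k (q + 1) 1 x (fun _ => x))) ∂(μ 1)
        = ∫⁻ x, ∫⁻ y, Λ y ∂((k 1) x) ∂(μ 1) := lintegral_congr e1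
      _ = ∫⁻ y, Λ y ∂((μ 1).bind (fun x => (k 1) x)) :=
          (Measure.lintegral_bind (Kernel.measurable _).aemeasurable hΛm.aemeasurable).symm
      _ = ∫⁻ y, Λ y ∂(μ 2) := by rw [← hcompat 1 le_rfl (by omega)]
      _ = ∫⁻ v, G v ∂ρ := hΛint
  have hfin : ∀ᵐ x ∂(μ 1), (∫⁻ v, G v ∂(mChain k (q + 1) 1 x (fun _ => x))) < ∞ :=
    ae_lt_top hmx (by rw [hL]; exact hGρ.ne)
  have h_ae : ∀ᵐ x ∂(μ 1),
      (∫ v, F v ∂(mChain k (q + 1) 1 x (fun _ => x))) ^ 2 = (∫ y, φ y ∂((k 1) x)) ^ 2 := by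
    filter_upwards [hfin] with x hx
    suffices h : ∫ v, F v ∂(mChain k (q + 1) 1 x (fun _ => x)) = ∫ y, φ y ∂((k 1) x) by rw [h]
    haveI : IsProbabilityMeasure (mChain k (q + 1) 1 x (fun _ => x)) :=
      MChainAux.mChain_prob k (q + 1) 1 x _
    have hsqM : Integrable (fun v => (F v) ^ 2) (mChain k (q + 1) 1 x (fun _ => x)) := by
      refine ⟨(hF.pow_const 2).aestronglyMeasurable, ?_⟩
      rw [HasFiniteIntegral]
      have he : ∀ v, (‖(F v) ^ 2‖₊ : ℝ≥0∞) = G v := fun v => by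
        rw [← enorm_eq_nnnorm, ← ofReal_norm, Real.norm_of_nonneg (sq_nonneg _)]
      calc ∫⁻ v, (‖(F v) ^ 2‖₊ : ℝ≥0∞) ∂(mChain k (q + 1) 1 x (fun _ => x))
          = ∫⁻ v, G v ∂(mChain k (q + 1) 1 x (fun _ => x)) := lintegral_congr fun v => he v
        _ < ∞ := hx
    have hFM : Integrable F (mChain k (q + 1) 1 x (fun _ => x)) :=
      ((memLp_two_iff_integrable_sq hF.aestronglyMeasurable).2 hsqM).integrable one_le_two
    have hdec : mChain k (q + 1) 1 x (fun _ => x)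
        = ((k 1) x).bind (fun y => mChain k q 2 y (Function.update (fun _ => x) 1 y)) := by
      rw [mChain]
    rw [hdec, MChainAux.integral_bind'' ((k 1) x)
      (MChainAux.measurable_mChain_fam k q 2 _ (MChainAux.measurable_update_fun 1 _))
      (fun y => MChainAux.mChain_prob k q 2 y _) hF (hdec ▸ hFM)]
    exact integral_congr_ae (Filter.Eventually.of_forall fun y => hW x y)
  calc ∫ x, (∫ v, F v ∂(mChain k (q + 1) 1 x (fun _ => x))) ^ 2 ∂(μ 1)
      = ∫ x, (∫ y, φ y ∂((k 1) x)) ^ 2 ∂(μ 1) := integral_congr_ae h_ae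
    _ ≤ c ^ 2 * ∫ y, (φ y) ^ 2 ∂(μ 2) := hKφ
    _ ≤ c ^ 2 * ∫ v, (F v) ^ 2 ∂ρ := mul_le_mul_of_nonneg_left hφ2le (sq_nonneg c)


end
end
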